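/- Suppose A ∈ Z^{n×d} is an integer matrix of rank r > k with all entries bounded in magnitude by M. Then the cost of the optimal rank-k approximation of A in Frobenius norm, namely (∑_{i=k+1}^{d} σ_i(A)^2)^{1/2}, is at least (n·d·M^2)^{-k/(r-k)}. -/

import Mathlib

open Matrix Polynomial

lemma aux_charpoly_conj {m : Type*} [Fintype m] [DecidableEq m] {R : Type*} [CommRing R]
    (P Q N : Matrix m m R) (h1 : P * Q = 1) :
    (P * N * Q).charpoly = N.charpoly := by
  have key : charmatrix (P * N * Q) =
      P.map (C : R → R[X]) * charmatrix N * Q.map (C : R → R[X]) := by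
    have hPQ : P.map (C : R → R[X]) * Q.map (C : R → R[X]) = 1 := by
      rw [← Matrix.map_mul, h1]
      simp
    simp only [charmatrix, Matrix.mul_sub, Matrix.sub_mul]
    congr 1
    · rw [scalar_apply, ← smul_one_eq_diagonal, Matrix.mul_smul, Matrix.smul_mul,
        Matrix.mul_one, hPQ]
    · simp only [RingHom.mapMatrix_apply, Matrix.map_mul]
  rw [Matrix.charpoly, key, Matrix.det_mul, Matrix.det_mul, Matrix.charpoly,
    mul_comm (P.map C).det, mul_assoc, ← Matrix.det_mul, ← Matrix.map_mul, h1]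
  simp

lemma aux_charpoly_diagonal {m : Type*} [Fintype m] [DecidableEq m] {R : Type*} [CommRing R]
    (w : m → R) :
    (Matrix.diagonal w).charpoly = ∏ i, (X - C (w i)) := by
  have : charmatrix (Matrix.diagonal w) = Matrix.diagonal (fun i => X - C (w i)) := by
    ext i j
    rcases eq_or_ne i j with rfl | h
    · simp
    · simp [h, Matrix.diagonal_apply_ne _ h]
  rw [Matrix.charpoly, this, Matrix.det_diagonal]

/-- Let `A ∈ ℤ^{n×d}` be an integer matrix of rank `r > k` with entries bounded in
magnitude by `M`, and let `σ₁ ≥ ... ≥ σ_d ≥ 0` be its singular values (so that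
`AᵀA = Uᵀ diag(σᵢ²) U` for an orthogonal `U`). Then the optimal rank-`k` Frobenius
approximation cost `(∑_{i>k} σᵢ²)^{1/2}` is at least `(n d M²)^{-k/(r-k)}`.
(Indices `i` here are 0-indexed, so `i ≥ k` corresponds to the 1-indexed `i ≥ k+1`.) -/
theorem stmt5 {n d k r : ℕ} (M : ℕ) (hrk : k < r)
    (A : Matrix (Fin n) (Fin d) ℤ)
    (hM : ∀ i j, |A i j| ≤ (M : ℤ))
    (hrank : (A.map (fun x : ℤ => (x : ℝ))).rank = r)
    (σ : Fin d → ℝ) (U : Matrix (Fin d) (Fin d) ℝ)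
    (hσmono : Antitone σ) (hσ0 : ∀ i, 0 ≤ σ i)
    (hU : U * Uᵀ = 1)
    (hSVD : (A.map (fun x : ℤ => (x : ℝ)))ᵀ * A.map (fun x : ℤ => (x : ℝ)) =
      Uᵀ * Matrix.diagonal (fun i => σ i ^ 2) * U) :
    ((n : ℝ) * (d : ℝ) * (M : ℝ) ^ 2) ^ (-(k : ℝ) / ((r : ℝ) - (k : ℝ))) ≤
      Real.sqrt (∑ i ∈ Finset.univ.filter (fun i : Fin d => k ≤ i.val), σ i ^ 2) := by
  classical
  set B : Matrix (Fin n) (Fin d) ℝ := A.map (fun x : ℤ => (x : ℝ)) with hB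
  set T : ℝ := (n : ℝ) * (d : ℝ) * (M : ℝ) ^ 2 with hTdef
  -- basic facts
  have hUtU : Uᵀ * U = 1 := mul_eq_one_comm.mp hU
  have hrd : r ≤ d := by
    rw [← hrank]
    simpa using B.rank_le_card_width
  -- charpoly of the Gram matrix
  have hG : Bᵀ * B = (Aᵀ * A).map (Int.castRingHom ℝ) := by
    rw [Matrix.map_mul, Matrix.transpose_map]
    rfl
  have hcp : (Bᵀ * B).charpoly = ∏ i, (X - C (σ i ^ 2)) := by
    rw [hSVD, aux_charpoly_conj _ _ _ hUtU, aux_charpoly_diagonal]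
  have hint : ∀ j, ∃ c : ℤ, (Bᵀ * B).charpoly.coeff j = (c : ℝ) := by
    intro j
    refine ⟨(Aᵀ * A).charpoly.coeff j, ?_⟩
    rw [hG, Matrix.charpoly_map, Polynomial.coeff_map]
    rfl
  -- rank facts : exactly the first r singular values are nonzero
  have hUdet : IsUnit U.det := by
    refine IsUnit.of_mul_eq_one Uᵀ.det ?_
    rw [← Matrix.det_mul, hU, Matrix.det_one]
  have hUtdet : IsUnit Uᵀ.det := by
    refine IsUnit.of_mul_eq_one U.det ?_
    rw [← Matrix.det_mul, hUtU, Matrix.det_one]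
  have hrankD : (Matrix.diagonal fun i => σ i ^ 2).rank = r := by
    have h1 : (Bᵀ * B).rank = r := by rw [Matrix.rank_transpose_mul_self]; exact hrank
    rw [hSVD, Matrix.rank_mul_eq_left_of_isUnit_det _ _ hUdet,
      Matrix.rank_mul_eq_right_of_isUnit_det _ _ hUtdet] at h1
    exact h1
  have hcard : Fintype.card {i // σ i ^ 2 ≠ 0} = r := by
    rw [← Matrix.rank_diagonal]; exact hrankD
  set S : Finset (Fin d) := Finset.univ.filter (fun i => σ i ≠ 0) with hSdef
  have hScard : S.card = r := by
    rw [← hcard, Fintype.card_subtype]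
    congr 1
    ext i
    simp [hSdef, pow_eq_zero_iff]
  have hzero : ∀ i : Fin d, r ≤ i.val → σ i = 0 := by
    intro i hi
    by_contra hne
    have hsub : Finset.Iic i ⊆ S := by
      intro j hj
      simp only [Finset.mem_Iic] at hj
      have : 0 < σ i := lt_of_le_of_ne (hσ0 i) (Ne.symm hne)
      have : 0 < σ j := lt_of_lt_of_le this (hσmono hj)
      simp [hSdef, this.ne']
    have := Finset.card_le_card hsub
    rw [hScard, Fin.card_Iic] at this
    omega
  have hpos : ∀ i : Fin d, i.val < r → 0 < σ i := by
    intro i hi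
    rcases lt_or_eq_of_le (hσ0 i) with h | h
    · exact h
    · exfalso
      have hsub : S ⊆ Finset.Iio i := by
        intro j hj
        simp only [hSdef, Finset.mem_filter] at hj
        simp only [Finset.mem_Iio]
        by_contra hji
        push_neg at hji
        have : σ j ≤ σ i := hσmono hji
        have : σ j = 0 := le_antisymm (by rw [← h] at this; exact this) (hσ0 j)
        exact hj.2 this
      have := Finset.card_le_card hsub
      rw [hScard, Fin.card_Iio] at this
      omega
  set P₁ : Finset (Fin d) := Finset.univ.filter (fun i : Fin d => i.val < r) with hP₁def
  have hP₁S : P₁ = S := by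
    ext i
    simp only [hP₁def, hSdef, Finset.mem_filter, Finset.mem_univ, true_and]
    constructor
    · intro h; exact (hpos i h).ne'
    · intro h
      by_contra hc
      push_neg at hc
      exact h (hzero i hc)
  have hP₁card : P₁.card = r := by rw [hP₁S, hScard]
  -- the product of the nonzero σᵢ² is at least 1
  have hsplit : (Bᵀ * B).charpoly =
      (∏ i ∈ P₁, (X - C (σ i ^ 2))) * X ^ (d - r) := by
    rw [hcp, ← Finset.prod_filter_mul_prod_filter_not Finset.univ (fun i : Fin d => i.val < r)]
    congr 1
    have hcard2 : (Finset.univ.filter (fun i : Fin d => ¬ i.val < r)).card = d - r := by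
      have := Finset.card_filter_add_card_filter_not
        (s := (Finset.univ : Finset (Fin d))) (p := fun i : Fin d => i.val < r)
      simp only [Finset.card_univ, Fintype.card_fin] at this
      rw [← hP₁def] at this
      omega
    rw [← hcard2, ← Finset.prod_const]
    apply Finset.prod_congr rfl
    intro i hi
    simp only [Finset.mem_filter, not_lt] at hi
    rw [hzero i hi.2]
    simp
  obtain ⟨c, hc⟩ := hint (d - r)
  have hcval : (c : ℝ) = (∏ i ∈ P₁, (X - C (σ i ^ 2)) : ℝ[X]).coeff 0 := by
    rw [← hc, hsplit, Polynomial.coeff_mul_X_pow']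
    simp
  have hcoeffval : ((∏ i ∈ P₁, (X - C (σ i ^ 2)) : ℝ[X]).coeff 0) =
      ∏ i ∈ P₁, (0 - σ i ^ 2) := by
    rw [Polynomial.coeff_zero_eq_eval_zero, Polynomial.eval_prod]
    apply Finset.prod_congr rfl
    intro i _
    simp
  have hprodpos : 0 < ∏ i ∈ P₁, σ i ^ 2 := by
    apply Finset.prod_pos
    intro i hi
    simp only [hP₁def, Finset.mem_filter] at hi
    exact pow_pos (hpos i hi.2) 2
  have hcabs : |(c : ℝ)| = ∏ i ∈ P₁, σ i ^ 2 := by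
    rw [hcval, hcoeffval, Finset.abs_prod]
    apply Finset.prod_congr rfl
    intro i _
    rw [zero_sub, abs_neg, abs_of_nonneg (sq_nonneg _)]
  have hcne : c ≠ 0 := by
    intro h
    rw [h] at hcabs
    simp at hcabs
    exact hprodpos.ne' hcabs.symm
  have h1le : (1 : ℝ) ≤ ∏ i ∈ P₁, σ i ^ 2 := by
    rw [← hcabs, ← Int.cast_abs]
    exact_mod_cast Int.one_le_abs hcne
  -- trace bound : each σᵢ² ≤ T
  have htr : ∑ i, σ i ^ 2 = (Bᵀ * B).trace := by
    rw [hSVD, Matrix.trace_mul_cycle, hU, Matrix.one_mul, Matrix.trace_diagonal]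
  have htrval : (Bᵀ * B).trace = ∑ j, ∑ i, B i j ^ 2 := by
    simp [Matrix.trace, Matrix.diag, Matrix.mul_apply, sq]
  have hentry : ∀ (i : Fin n) (j : Fin d), B i j ^ 2 ≤ (M : ℝ) ^ 2 := by
    intro i j
    have h1 : (A i j) ^ 2 ≤ (M : ℤ) ^ 2 := sq_le_sq' (neg_le_of_abs_le (hM i j)) (le_of_abs_le (hM i j))
    have : ((A i j : ℤ) : ℝ) ^ 2 ≤ ((M : ℤ) : ℝ) ^ 2 := by exact_mod_cast h1
    simpa [hB] using this
  have hsumT : ∑ i, σ i ^ 2 ≤ T := by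
    rw [htr, htrval]
    calc ∑ j, ∑ i, B i j ^ 2 ≤ ∑ j : Fin d, ∑ i : Fin n, (M : ℝ) ^ 2 := by
          apply Finset.sum_le_sum; intro j _
          apply Finset.sum_le_sum; intro i _
          exact hentry i j
      _ = T := by
          simp [Finset.sum_const, Finset.card_univ, hTdef]
          ring
  have hσT : ∀ i : Fin d, σ i ^ 2 ≤ T := by
    intro i
    refine le_trans ?_ hsumT
    exact Finset.single_le_sum (fun j _ => sq_nonneg (σ j)) (Finset.mem_univ i)
  have hT0 : (0 : ℝ) ≤ T := by positivity
  have hT1 : (1 : ℝ) ≤ T := by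
    by_contra hc1
    push_neg at hc1
    have hTr : ∏ i ∈ P₁, σ i ^ 2 ≤ T ^ r := by
      calc ∏ i ∈ P₁, σ i ^ 2 ≤ ∏ _i ∈ P₁, T :=
            Finset.prod_le_prod (fun i _ => sq_nonneg _) (fun i _ => hσT i)
        _ = T ^ r := by rw [Finset.prod_const, hP₁card]
    have : T ^ r < 1 := pow_lt_one₀ hT0 hc1 (by omega)
    linarith
  -- now bound σₖ²
  have hkd : k < d := lt_of_lt_of_le hrk hrd
  set ik : Fin d := ⟨k, hkd⟩ with hikdef
  set s : ℝ := σ ik ^ 2 with hsdef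
  have hs_pos : 0 < s := pow_pos (hpos ik hrk) 2
  have hsplitP : (∏ i ∈ P₁, σ i ^ 2) =
      (∏ i ∈ P₁.filter (fun i => i.val < k), σ i ^ 2) *
      (∏ i ∈ P₁.filter (fun i => ¬ i.val < k), σ i ^ 2) :=
    (Finset.prod_filter_mul_prod_filter_not P₁ _ _).symm
  have hQ1 : P₁.filter (fun i => i.val < k) = Finset.Iio ik := by
    ext i
    simp only [Finset.mem_filter, hP₁def, Finset.mem_univ, true_and, Finset.mem_Iio]
    constructor
    · rintro ⟨-, h2⟩; exact h2
    · intro h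
      have : i.val < k := h
      omega
  have hQ1card : (P₁.filter (fun i => i.val < k)).card = k := by
    rw [hQ1, Fin.card_Iio]
  have hQ2card : (P₁.filter (fun i => ¬ i.val < k)).card = r - k := by
    have := Finset.card_filter_add_card_filter_not
      (s := P₁) (p := fun i : Fin d => i.val < k)
    rw [hP₁card, hQ1card] at this
    omega
  have hbound1 : (∏ i ∈ P₁.filter (fun i => i.val < k), σ i ^ 2) ≤ T ^ k := by
    calc ∏ i ∈ P₁.filter (fun i => i.val < k), σ i ^ 2
        ≤ ∏ _i ∈ P₁.filter (fun i => i.val < k), T :=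
          Finset.prod_le_prod (fun i _ => sq_nonneg _) (fun i _ => hσT i)
      _ = T ^ k := by rw [Finset.prod_const, hQ1card]
  have hbound2 : (∏ i ∈ P₁.filter (fun i => ¬ i.val < k), σ i ^ 2) ≤ s ^ (r - k) := by
    calc ∏ i ∈ P₁.filter (fun i => ¬ i.val < k), σ i ^ 2
        ≤ ∏ _i ∈ P₁.filter (fun i => ¬ i.val < k), s := by
          refine Finset.prod_le_prod (fun i _ => sq_nonneg _) ?_
          intro i hi
          simp only [Finset.mem_filter, not_lt] at hi
          have hik : ik ≤ i := by
            rw [Fin.le_def]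
            exact hi.2
          exact pow_le_pow_left₀ (hσ0 i) (hσmono hik) 2
      _ = s ^ (r - k) := by rw [Finset.prod_const, hQ2card]
  have hkey : (1 : ℝ) ≤ T ^ k * s ^ (r - k) := by
    calc (1 : ℝ) ≤ ∏ i ∈ P₁, σ i ^ 2 := h1le
      _ = _ * _ := hsplitP
      _ ≤ T ^ k * s ^ (r - k) := by
          apply mul_le_mul hbound1 hbound2 (Finset.prod_nonneg (fun i _ => sq_nonneg _))
            (by positivity)
  -- rpow manipulation
  have hrk' : (0 : ℝ) < (r : ℝ) - (k : ℝ) := by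
    have : (k : ℝ) < (r : ℝ) := by exact_mod_cast hrk
    linarith
  have hTkpos : (0 : ℝ) < T ^ k := pow_pos (lt_of_lt_of_le one_pos hT1) k
  have h2 : (T ^ k)⁻¹ ≤ s ^ (r - k) := by
    rw [inv_eq_one_div, div_le_iff₀ hTkpos]
    have hcomm : s ^ (r - k) * T ^ k = T ^ k * s ^ (r - k) := mul_comm _ _
    linarith [hkey]
  have hst : T ^ (-(k : ℝ) / ((r : ℝ) - (k : ℝ))) ≤ s := by
    have h2' : T ^ (-(k : ℝ)) ≤ s ^ (((r - k : ℕ) : ℝ)) := by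
      rw [Real.rpow_neg hT0, Real.rpow_natCast, Real.rpow_natCast]
      exact h2
    have h3 := Real.rpow_le_rpow (Real.rpow_nonneg hT0 _) h2'
      (le_of_lt (by positivity : (0:ℝ) < 1 / ((r : ℝ) - (k : ℝ))))
    have hcast : ((r - k : ℕ) : ℝ) = (r : ℝ) - (k : ℝ) := by
      rw [Nat.cast_sub hrk.le]
    rw [← Real.rpow_mul hT0, ← Real.rpow_mul hs_pos.le, hcast, mul_one_div, mul_one_div,
      div_self hrk'.ne', Real.rpow_one] at h3
    exact h3
  have hTe1 : T ^ (-(k : ℝ) / ((r : ℝ) - (k : ℝ))) ≤ 1 := by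
    apply Real.rpow_le_one_of_one_le_of_nonpos hT1
    apply div_nonpos_of_nonpos_of_nonneg
    · simp
    · linarith
  have hTe0 : (0 : ℝ) ≤ T ^ (-(k : ℝ) / ((r : ℝ) - (k : ℝ))) := Real.rpow_nonneg hT0 _
  have hmem : ik ∈ Finset.univ.filter (fun i : Fin d => k ≤ i.val) := by
    simp [hikdef]
  have hs_le_sum : s ≤ ∑ i ∈ Finset.univ.filter (fun i : Fin d => k ≤ i.val), σ i ^ 2 :=
    Finset.single_le_sum (fun j _ => sq_nonneg (σ j)) hmem
  have hsum0 : (0:ℝ) ≤ ∑ i ∈ Finset.univ.filter (fun i : Fin d => k ≤ i.val), σ i ^ 2 :=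
    Finset.sum_nonneg (fun j _ => sq_nonneg (σ j))
  rw [Real.le_sqrt hTe0 hsum0]
  calc (T ^ (-(k : ℝ) / ((r : ℝ) - (k : ℝ)))) ^ 2
      ≤ 1 * (T ^ (-(k : ℝ) / ((r : ℝ) - (k : ℝ)))) := by
        rw [sq]; exact mul_le_mul_of_nonneg_right hTe1 hTe0
    _ = T ^ (-(k : ℝ) / ((r : ℝ) - (k : ℝ))) := one_mul _
    _ ≤ s := hst
    _ ≤ _ := hs_le_sum
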